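/- For each n ∈ ℕ, let Γ_n be a group with finite symmetric generating set S_n acting on a probability space (X_n,ν_n) by measurable, measure-preserving bijections, and let E be a Banach space. Suppose all actions have E-spectral gap with a common constant ε > 0. Let P_n be finite measurable partitions of X_n into regions of positive measure, each with Q-bounded measure ratios (ν_n(R) ≤ Q·ν_n(R') for all regions R, R' ∈ P_n, with Q independent of n), suppose each approximating graph G_{P_n} is connected with all vertex degrees at most D (D ≥ 2, independent of n), and suppose |P_n| → ∞. Then for every pair of nondecreasing unbounded functions ρ₋, ρ₊ : [0,∞) → [0,∞), it is not the case that for every n there exists a coarse embedding f̂_n : P_n → E of G_{P_n} into E with control functions ρ₋, ρ₊. -/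

import Mathlib

open MeasureTheory
open scoped NNReal ENNReal Classical

/-- The approximating graph `G_P` of a partition `P` with respect to an action of `Γ` on `(X, ν)`:
vertices are the regions of `P`, and two distinct regions `A, B` are adjacent iff there is
`s ∈ S` with `ν ((s • A) ∩ B) > 0`.  (Under the standing hypotheses — `S` symmetric and the
action measure preserving — the relation below is symmetric, so `fromRel` yields exactly this
graph.) -/
def approxGraph {Γ X : Type*} [Group Γ] [MulAction Γ X] [MeasurableSpace X]
    (ν : Measure X) (S : Finset Γ) (P : Finset (Set X)) :
    SimpleGraph {A : Set X // A ∈ P} :=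
  SimpleGraph.fromRel fun A B => ∃ s ∈ S, 0 < ν ((fun y => s • y) '' A.1 ∩ B.1)

/-- Let `Γ n ↷ (X n, ν n)` be measure-preserving actions all having `E`-spectral gap with a common
constant `ε > 0`.  Let `P n` be finite measurable partitions with `Q`-bounded measure ratios whose
approximating graphs are connected, of degree at most `D ≥ 2`, with `|P n| → ∞`.  Then for every
pair of nondecreasing unbounded control functions `ρ₋, ρ₊`, it is not the case that for every `n`
there is a coarse embedding of the approximating graph into `E` with control functions
`ρ₋, ρ₊`. -/
private lemma walkBall_card_le {V : Type*} [Fintype V] (G : SimpleGraph V) (D : ℕ)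
    (hdeg : ∀ v : V, {w | G.Adj v w}.ncard ≤ D) :
    ∀ (k : ℕ) (v : V),
      (Finset.univ.filter fun w => ∃ p : G.Walk v w, p.length ≤ k).card ≤ (D + 1) ^ k := by
  intro k
  induction k with
  | zero =>
    intro v
    have hsub : (Finset.univ.filter fun w => ∃ p : G.Walk v w, p.length ≤ 0) ⊆ {v} := by
      intro w hw
      simp only [Finset.mem_filter, Finset.mem_univ, true_and] at hw
      obtain ⟨p, hp⟩ := hw
      have := SimpleGraph.Walk.eq_of_length_eq_zero (Nat.le_zero.mp hp)
      simp [← this]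
    simpa using Finset.card_le_card hsub
  | succ k ih =>
    intro v
    have hsub : (Finset.univ.filter fun w => ∃ p : G.Walk v w, p.length ≤ k + 1)
        ⊆ {v} ∪ (Finset.univ.filter (fun u => G.Adj v u)).biUnion
            (fun u => Finset.univ.filter fun w => ∃ p : G.Walk u w, p.length ≤ k) := by
      intro w hw
      simp only [Finset.mem_filter, Finset.mem_union, Finset.mem_biUnion, Finset.mem_singleton,
        Finset.mem_univ, true_and] at hw ⊢
      obtain ⟨p, hp⟩ := hw
      cases p with
      | nil => left; rfl
      | @cons _ u _ h q =>
        right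
        refine ⟨u, h, q, ?_⟩
        simp only [SimpleGraph.Walk.length_cons] at hp
        omega
    have hN : (Finset.univ.filter (fun u => G.Adj v u)).card ≤ D := by
      have hset : ((Finset.univ.filter (fun u => G.Adj v u) : Finset V) : Set V)
          = {w | G.Adj v w} := by ext w; simp
      have := hdeg v
      rw [← hset, Set.ncard_coe_finset] at this
      exact this
    have h1 : 1 ≤ (D + 1) ^ k := Nat.one_le_pow _ _ (by omega)
    calc (Finset.univ.filter fun w => ∃ p : G.Walk v w, p.length ≤ k + 1).card
        ≤ ({v} ∪ (Finset.univ.filter (fun u => G.Adj v u)).biUnion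
            (fun u => Finset.univ.filter fun w => ∃ p : G.Walk u w, p.length ≤ k)).card :=
          Finset.card_le_card hsub
      _ ≤ 1 + ((Finset.univ.filter (fun u => G.Adj v u)).biUnion
            (fun u => Finset.univ.filter fun w => ∃ p : G.Walk u w, p.length ≤ k)).card := by
          exact (Finset.card_union_le _ _).trans (by rw [Finset.card_singleton])
      _ ≤ 1 + ∑ u ∈ Finset.univ.filter (fun u => G.Adj v u),
            (Finset.univ.filter fun w => ∃ p : G.Walk u w, p.length ≤ k).card := by
          exact Nat.add_le_add_left (Finset.card_biUnion_le) _
      _ ≤ 1 + (Finset.univ.filter (fun u => G.Adj v u)).card * (D + 1) ^ k := by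
          refine Nat.add_le_add_left ?_ _
          simpa [smul_eq_mul] using Finset.sum_le_card_nsmul _ _ ((D+1)^k) (fun u _ => ih u)
      _ ≤ 1 + D * (D + 1) ^ k := by
          exact Nat.add_le_add_left (Nat.mul_le_mul_right _ hN) _
      _ ≤ (D + 1) ^ (k + 1) := by
          have : (D + 1) ^ (k + 1) = (D + 1) ^ k + D * (D + 1) ^ k := by ring
          omega

set_option maxHeartbeats 1000000 in
theorem statement4
    {E : Type*} [NormedAddCommGroup E] [NormedSpace ℝ E] [CompleteSpace E]
    (Γ : ℕ → Type*) [∀ n, Group (Γ n)]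
    (X : ℕ → Type*) [∀ n, MeasurableSpace (X n)] [∀ n, MulAction (Γ n) (X n)]
    (ν : ∀ n, Measure (X n)) [∀ n, IsProbabilityMeasure (ν n)]
    (S : ∀ n, Finset (Γ n))
    (hSsym : ∀ n, ∀ s ∈ S n, s⁻¹ ∈ S n)
    (hSgen : ∀ n, Subgroup.closure ((S n : Set (Γ n))) = ⊤)
    (hact : ∀ n, ∀ γ : Γ n, MeasurePreserving (fun x : X n => γ • x) (ν n) (ν n))
    (ε : ℝ) (hε : 0 < ε)
    (hgap : ∀ n, ∀ f : X n → E, MemLp f 2 (ν n) → (∫ x, f x ∂(ν n)) = 0 →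
      ∃ s ∈ S n, ε * Real.sqrt (∫ x, ‖f x‖ ^ 2 ∂(ν n))
        ≤ Real.sqrt (∫ x, ‖f x - f (s⁻¹ • x)‖ ^ 2 ∂(ν n)))
    (P : ∀ n, Finset (Set (X n)))
    (hPmeas : ∀ n, ∀ A ∈ P n, MeasurableSet A)
    (hPpos : ∀ n, ∀ A ∈ P n, 0 < ν n A)
    (hPdisj : ∀ n, ∀ A ∈ P n, ∀ B ∈ P n, A ≠ B → Disjoint A B)
    (hPcover : ∀ n, ∀ x : X n, ∃ A ∈ P n, x ∈ A)
    (Q : ℝ≥0)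
    (hQ : ∀ n, ∀ A ∈ P n, ∀ B ∈ P n, ν n A ≤ (Q : ℝ≥0∞) * ν n B)
    (hconn : ∀ n, (approxGraph (ν n) (S n) (P n)).Connected)
    (D : ℕ) (hD : 2 ≤ D)
    (hdeg : ∀ n, ∀ v : {A : Set (X n) // A ∈ P n},
      {w | (approxGraph (ν n) (S n) (P n)).Adj v w}.ncard ≤ D)
    (hcard : Filter.Tendsto (fun n => (P n).card) Filter.atTop Filter.atTop)
    (ρminus ρplus : ℝ → ℝ)
    (hmonoMinus : MonotoneOn ρminus (Set.Ici 0)) (hmonoPlus : MonotoneOn ρplus (Set.Ici 0))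
    (hnnMinus : ∀ x ≥ (0:ℝ), 0 ≤ ρminus x) (hnnPlus : ∀ x ≥ (0:ℝ), 0 ≤ ρplus x)
    (hunbMinus : ∀ c : ℝ, ∃ x ≥ (0:ℝ), c ≤ ρminus x)
    (hunbPlus : ∀ c : ℝ, ∃ x ≥ (0:ℝ), c ≤ ρplus x) :
    ¬ ∀ n, ∃ fhat : {A : Set (X n) // A ∈ P n} → E,
        ∀ A B : {A : Set (X n) // A ∈ P n},
          ρminus ((approxGraph (ν n) (S n) (P n)).dist A B : ℝ) ≤ ‖fhat A - fhat B‖ ∧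
          ‖fhat A - fhat B‖ ≤ ρplus ((approxGraph (ν n) (S n) (P n)).dist A B : ℝ) := by
  intro H
  have hρ1nn : 0 ≤ ρplus 1 := hnnPlus 1 (by norm_num)
  set C : ℝ := ρplus 1 / ε with hCdef
  have hC0 : 0 ≤ C := div_nonneg hρ1nn hε.le
  obtain ⟨x0, hx00, hx0⟩ := hunbMinus (3 * C + 1)
  set k : ℕ := ⌈x0⌉₊ with hkdef
  have hk0 : (0:ℝ) ≤ (k:ℝ) := Nat.cast_nonneg _
  have hρk : 3 * C + 1 ≤ ρminus (k : ℝ) :=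
    hx0.trans (hmonoMinus (Set.mem_Ici.mpr hx00) (Set.mem_Ici.mpr hk0) (Nat.le_ceil x0))
  set q : ℕ := ⌈Q⌉₊ + 1 with hqdef
  set M : ℕ := 2 * q * (D + 1) ^ k with hMdef
  have hM2 : 2 ≤ M := by
    have h1 : 1 ≤ (D + 1) ^ k := Nat.one_le_pow _ _ (by omega)
    have hq1 : 1 ≤ q := by omega
    calc 2 = 2 * 1 * 1 := by ring
      _ ≤ 2 * q * (D + 1) ^ k := by
          exact Nat.mul_le_mul (Nat.mul_le_mul_left _ hq1) h1
  obtain ⟨n, hn⟩ := (hcard.eventually_ge_atTop M).exists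
  obtain ⟨fhat, hfhat⟩ := H n
  set G := approxGraph (ν n) (S n) (P n) with hGdef
  -- the region map
  have hr' : ∀ x : X n, ∃ A : {A : Set (X n) // A ∈ P n}, x ∈ A.1 := by
    intro x; obtain ⟨A, hA, hx⟩ := hPcover n x; exact ⟨⟨A, hA⟩, hx⟩
  choose r hr using hr'
  have hrunique : ∀ (x : X n) (B : {A : Set (X n) // A ∈ P n}), x ∈ B.1 → r x = B := by
    intro x B hx
    by_contra hne
    have hd := hPdisj n (r x).1 (r x).2 B.1 B.2 (fun h => hne (Subtype.ext h))
    exact (Set.disjoint_left.mp hd (hr x)) hx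
  set f : X n → E := fun x => fhat (r x) with hfdef
  have hfsm : StronglyMeasurable f := by
    have hfsum : f = fun x => ∑ A ∈ (P n).attach, Set.indicator A.1 (fun _ => fhat A) x := by
      funext x
      have h1 := Finset.sum_eq_single_of_mem (s := (P n).attach)
        (f := fun A => Set.indicator A.1 (fun _ => fhat A) x) (r x) (Finset.mem_attach _ _)
        (by
          intro B _ hBne
          apply Set.indicator_of_notMem
          intro hxB
          exact hBne (hrunique x B hxB).symm)
      rw [h1, Set.indicator_of_mem (hr x)]
    rw [hfsum]
    exact Finset.stronglyMeasurable_fun_sum _ fun A _ =>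
      stronglyMeasurable_const.indicator (hPmeas n A.1 A.2)
  -- nonemptiness
  have hcard2 : 2 ≤ (P n).card := le_trans hM2 hn
  obtain ⟨A1, hA1⟩ := Finset.card_pos.mp (by omega : 0 < (P n).card)
  -- uniform bound on f
  have hne : (Finset.univ : Finset {A : Set (X n) // A ∈ P n}).Nonempty :=
    ⟨⟨A1, hA1⟩, Finset.mem_univ _⟩
  set K : ℝ := Finset.univ.sup' hne (fun A => ‖fhat A‖) with hKdef
  have hfK : ∀ x, ‖f x‖ ≤ K := fun x =>
    Finset.le_sup' (fun A => ‖fhat A‖) (Finset.mem_univ (r x))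
  have hfint : Integrable f (ν n) :=
    (MemLp.of_bound hfsm.aestronglyMeasurable K
      (Filter.Eventually.of_forall hfK) : MemLp f 1 (ν n)).integrable le_rfl
  set m : E := ∫ x, f x ∂(ν n) with hmdef
  have hgsm : StronglyMeasurable (fun x => f x - m) := hfsm.sub stronglyMeasurable_const
  have hgK : ∀ x, ‖f x - m‖ ≤ K + ‖m‖ := fun x =>
    (norm_sub_le _ _).trans (add_le_add_left (hfK x) _)
  have hgmem : MemLp (fun x => f x - m) 2 (ν n) :=
    MemLp.of_bound hgsm.aestronglyMeasurable (K + ‖m‖) (Filter.Eventually.of_forall hgK)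
  have hgzero : (∫ x, f x - m ∂(ν n)) = 0 := by
    rw [integral_sub hfint (integrable_const m)]
    simp [hmdef]
  obtain ⟨s, hsS, hineq⟩ := hgap n (fun x => f x - m) hgmem hgzero
  simp only [sub_sub_sub_cancel_right] at hineq
  set V : ℝ := ∫ x, ‖f x - m‖ ^ 2 ∂(ν n) with hVdef
  have hVint : Integrable (fun x => ‖f x - m‖ ^ 2) (ν n) := by
    refine (MemLp.of_bound ((hgsm.norm.measurable.pow_const 2).aestronglyMeasurable)
      ((K + ‖m‖) ^ 2) (Filter.Eventually.of_forall fun x => ?_) : MemLp _ 1 _).integrable le_rfl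
    rw [Real.norm_eq_abs, abs_of_nonneg (by positivity)]
    exact pow_le_pow_left₀ (norm_nonneg _) (hgK x) 2
  have hV0 : 0 ≤ V := integral_nonneg fun x => by positivity
  -- the bad null set for the edge bound
  set T : Set (X n) := ⋃ (A : {A : Set (X n) // A ∈ P n}) (B : {A : Set (X n) // A ∈ P n})
      (_ : ν n ((fun y => s • y) '' B.1 ∩ A.1) = 0), ((fun y => s • y) '' B.1 ∩ A.1) with hTdef
  have hT0 : ν n T = 0 :=
    measure_iUnion_null fun A => measure_iUnion_null fun B => measure_iUnion_null fun h => h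
  have hedge : ∀ x ∉ T, ‖f x - f (s⁻¹ • x)‖ ≤ ρplus 1 := by
    intro x hx
    have hxmem : x ∈ (fun y => s • y) '' (r (s⁻¹ • x)).1 ∩ (r x).1 :=
      ⟨⟨s⁻¹ • x, hr _, by simp⟩, hr x⟩
    by_cases hAB : r x = r (s⁻¹ • x)
    · have : f x - f (s⁻¹ • x) = 0 := by
        show fhat (r x) - fhat (r (s⁻¹ • x)) = 0
        rw [hAB, sub_self]
      rw [this, norm_zero]
      exact hρ1nn
    · have hpos : 0 < ν n ((fun y => s • y) '' (r (s⁻¹ • x)).1 ∩ (r x).1) := by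
        refine pos_iff_ne_zero.mpr fun h => hx ?_
        exact Set.mem_iUnion.mpr ⟨r x, Set.mem_iUnion.mpr ⟨r (s⁻¹ • x),
          Set.mem_iUnion.mpr ⟨h, hxmem⟩⟩⟩
      have hadj : G.Adj (r x) (r (s⁻¹ • x)) := by
        rw [hGdef]
        exact ⟨hAB, Or.inr ⟨s, hsS, hpos⟩⟩
      have hdist : G.dist (r x) (r (s⁻¹ • x)) = 1 := SimpleGraph.dist_eq_one_iff_adj.mpr hadj
      have := (hfhat (r x) (r (s⁻¹ • x))).2
      rw [hdist] at this
      simpa using this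
  have hae : ∀ᵐ x ∂(ν n), ‖f x - f (s⁻¹ • x)‖ ≤ ρplus 1 := by
    rw [MeasureTheory.ae_iff]
    refine measure_mono_null (fun x hx => ?_) hT0
    by_contra hxT
    exact hx (hedge x hxT)
  have hdiffint : Integrable (fun x => ‖f x - f (s⁻¹ • x)‖ ^ 2) (ν n) := by
    have hsm : StronglyMeasurable (fun x => f x - f (s⁻¹ • x)) :=
      hfsm.sub (hfsm.comp_measurable (hact n s⁻¹).measurable)
    refine (MemLp.of_bound ((hsm.norm.measurable.pow_const 2).aestronglyMeasurable)
      ((K + K) ^ 2) (Filter.Eventually.of_forall fun x => ?_) : MemLp _ 1 _).integrable le_rfl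
    rw [Real.norm_eq_abs, abs_of_nonneg (by positivity)]
    exact pow_le_pow_left₀ (norm_nonneg _)
      ((norm_sub_le _ _).trans (add_le_add (hfK x) (hfK _))) 2
  have hIup : (∫ x, ‖f x - f (s⁻¹ • x)‖ ^ 2 ∂(ν n)) ≤ (ρplus 1) ^ 2 := by
    calc (∫ x, ‖f x - f (s⁻¹ • x)‖ ^ 2 ∂(ν n))
        ≤ ∫ _, (ρplus 1) ^ 2 ∂(ν n) := by
          refine integral_mono_ae hdiffint (integrable_const _) ?_
          exact hae.mono fun x hx => pow_le_pow_left₀ (norm_nonneg _) hx 2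
      _ = (ρplus 1) ^ 2 := by simp
  have hsqrtC : Real.sqrt V ≤ C := by
    have h2 : Real.sqrt (∫ x, ‖f x - f (s⁻¹ • x)‖ ^ 2 ∂(ν n)) ≤ ρplus 1 := by
      refine (Real.sqrt_le_sqrt hIup).trans ?_
      rw [Real.sqrt_sq hρ1nn]
    rw [hCdef, le_div_iff₀ hε, mul_comm]
    exact le_trans hineq h2
  have hVC : V ≤ C ^ 2 := by
    nlinarith [Real.sq_sqrt hV0, Real.sqrt_nonneg V]
  -- a vertex whose image is close to the mean
  obtain ⟨A0, -, hA0min⟩ := Finset.exists_min_image Finset.univ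
    (fun A : {A : Set (X n) // A ∈ P n} => ‖fhat A - m‖) hne
  have hA0C : ‖fhat A0 - m‖ ≤ C := by
    have hpt : ∀ x, ‖fhat A0 - m‖ ^ 2 ≤ ‖f x - m‖ ^ 2 := fun x =>
      pow_le_pow_left₀ (norm_nonneg _) (hA0min (r x) (Finset.mem_univ _)) 2
    have h1 : ‖fhat A0 - m‖ ^ 2 ≤ V := by
      have h2 := integral_mono (integrable_const (‖fhat A0 - m‖ ^ 2)) hVint hpt
      simpa using h2
    nlinarith [norm_nonneg (fhat A0 - m)]
  -- the ball around A0 in the graph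
  set ballF : Finset {A : Set (X n) // A ∈ P n} :=
    Finset.univ.filter (fun B => G.dist A0 B ≤ k) with hballdef
  have hballcard : ballF.card ≤ (D + 1) ^ k := by
    refine le_trans (Finset.card_le_card ?_) (walkBall_card_le G D (hdeg n) k A0)
    intro B hB
    simp only [hballdef, Finset.mem_filter, Finset.mem_univ, true_and] at hB ⊢
    obtain ⟨p, hp⟩ := ((hconn n).preconnected A0 B).exists_walk_length_eq_dist
    exact ⟨p, by rw [hp]; exact hB⟩
  set farF : Finset {A : Set (X n) // A ∈ P n} :=
    Finset.univ.filter (fun B => ¬ G.dist A0 B ≤ k) with hfardef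
  set Fs : Set (X n) := ⋃ B ∈ farF, B.1 with hFsdef
  have hFmeas : MeasurableSet Fs := Finset.measurableSet_biUnion _ fun B _ => hPmeas n B.1 B.2
  -- measure estimates
  obtain ⟨B0, hB0P, hB0min⟩ := Finset.exists_min_image (P n) (ν n) ⟨A1, hA1⟩
  have hsum1 : ∑ A ∈ P n, ν n A = 1 := by
    have hdisj : (↑(P n) : Set (Set (X n))).PairwiseDisjoint (fun A => A) :=
      fun A hA B hB hAB => hPdisj n A hA B hB hAB
    have h := measure_biUnion_finset (μ := ν n) hdisj (fun A hA => hPmeas n A hA)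
    have huniv : ⋃ A ∈ P n, A = Set.univ := by
      ext x
      simp only [Set.mem_iUnion, Set.mem_univ, iff_true]
      obtain ⟨A, hA, hxA⟩ := hPcover n x
      exact ⟨A, hA, hxA⟩
    rw [huniv, measure_univ] at h
    exact h.symm
  have hminN : ((P n).card : ℝ≥0∞) * ν n B0 ≤ 1 := by
    have h := Finset.card_nsmul_le_sum (P n) (ν n) (ν n B0) (fun A hA => hB0min A hA)
    rwa [nsmul_eq_mul, hsum1] at h
  have hQq : (Q : ℝ≥0∞) ≤ (q : ℝ≥0∞) := by
    have h1 : Q ≤ (q : ℝ≥0) := le_trans (Nat.le_ceil Q) (by exact_mod_cast Nat.le_succ _)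
    exact_mod_cast h1
  have hreg : ∀ A ∈ P n, ν n A ≤ (q : ℝ≥0∞) * ν n B0 := fun A hA =>
    (hQ n A hA B0 hB0P).trans (mul_le_mul_left hQq _)
  have h2b : 2 * ∑ B ∈ ballF, ν n B.1 ≤ 1 := by
    have hbs : ∑ B ∈ ballF, ν n B.1 ≤ (ballF.card : ℝ≥0∞) * ((q : ℝ≥0∞) * ν n B0) := by
      have h := Finset.sum_le_card_nsmul ballF (fun B => ν n B.1) ((q : ℝ≥0∞) * ν n B0)
        (fun B _ => hreg B.1 B.2)
      rwa [nsmul_eq_mul] at h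
    calc 2 * ∑ B ∈ ballF, ν n B.1
        ≤ 2 * ((ballF.card : ℝ≥0∞) * ((q : ℝ≥0∞) * ν n B0)) := by gcongr
      _ ≤ 2 * ((((D + 1) ^ k : ℕ) : ℝ≥0∞) * ((q : ℝ≥0∞) * ν n B0)) := by
          have hc : (ballF.card : ℝ≥0∞) ≤ (((D + 1) ^ k : ℕ) : ℝ≥0∞) := by exact_mod_cast hballcard
          gcongr
      _ = ((2 * q * (D + 1) ^ k : ℕ) : ℝ≥0∞) * ν n B0 := by push_cast; ring
      _ ≤ (((P n).card : ℕ) : ℝ≥0∞) * ν n B0 := by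
          have hc : ((2 * q * (D + 1) ^ k : ℕ) : ℝ≥0∞) ≤ (((P n).card : ℕ) : ℝ≥0∞) := by
            exact_mod_cast hn
          gcongr
      _ ≤ 1 := hminN
  have hFhalf : (2⁻¹ : ℝ≥0∞) ≤ ν n Fs := by
    have hcover2 : (Set.univ : Set (X n)) ⊆ Fs ∪ ⋃ B ∈ ballF, B.1 := by
      intro x _
      by_cases hd : G.dist A0 (r x) ≤ k
      · exact Or.inr (Set.mem_iUnion₂.mpr
          ⟨r x, Finset.mem_filter.mpr ⟨Finset.mem_univ _, hd⟩, hr x⟩)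
      · exact Or.inl (Set.mem_iUnion₂.mpr
          ⟨r x, Finset.mem_filter.mpr ⟨Finset.mem_univ _, hd⟩, hr x⟩)
    have h1 : (1 : ℝ≥0∞) ≤ ν n Fs + ν n (⋃ B ∈ ballF, B.1) := by
      calc (1 : ℝ≥0∞) = ν n Set.univ := measure_univ.symm
        _ ≤ ν n (Fs ∪ ⋃ B ∈ ballF, B.1) := measure_mono hcover2
        _ ≤ _ := measure_union_le _ _
    have h2 : ν n (⋃ B ∈ ballF, B.1) ≤ 2⁻¹ := by
      refine le_trans (measure_biUnion_finset_le _ _) ?_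
      exact ENNReal.le_inv_iff_mul_le.mpr (by rw [mul_comm]; exact h2b)
    calc (2⁻¹ : ℝ≥0∞) = 1 - 2⁻¹ := ENNReal.one_sub_inv_two.symm
      _ ≤ ν n Fs := tsub_le_iff_right.mpr (h1.trans (add_le_add_right h2 _))
  have hFreal : (2⁻¹ : ℝ) ≤ (ν n Fs).toReal := by
    have := ENNReal.toReal_mono (measure_ne_top (ν n) Fs) hFhalf
    simpa using this
  -- pointwise lower bound on the far set
  have hptF : ∀ x ∈ Fs, (2 * C + 1) ^ 2 ≤ ‖f x - m‖ ^ 2 := by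
    intro x hx
    obtain ⟨B, hBfar, hxB⟩ := Set.mem_iUnion₂.mp hx
    have hrB : r x = B := hrunique x B hxB
    have hdk : ¬ G.dist A0 B ≤ k := by
      have := Finset.mem_filter.mp hBfar
      exact this.2
    have hkle : (k : ℝ) ≤ (G.dist A0 B : ℝ) := by exact_mod_cast (not_le.mp hdk).le
    have hρ : 3 * C + 1 ≤ ρminus (G.dist A0 B : ℝ) :=
      hρk.trans (hmonoMinus (Set.mem_Ici.mpr hk0)
        (Set.mem_Ici.mpr (le_trans hk0 hkle)) hkle)
    have hlb : 3 * C + 1 ≤ ‖fhat A0 - fhat B‖ := hρ.trans (hfhat A0 B).1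
    have htri : ‖fhat A0 - fhat B‖ ≤ ‖fhat A0 - m‖ + ‖fhat B - m‖ := by
      have h := norm_sub_le (fhat A0 - m) (fhat B - m)
      rw [sub_sub_sub_cancel_right] at h
      linarith [h, norm_sub_rev (fhat B - m) (fhat A0 - m)]
    have hBm : 2 * C + 1 ≤ ‖fhat B - m‖ := by linarith
    have hfx : f x - m = fhat B - m := by
      show fhat (r x) - m = fhat B - m
      rw [hrB]
    rw [hfx]
    exact pow_le_pow_left₀ (by linarith) hBm 2
  -- the contradiction
  have hlow : (2 * C + 1) ^ 2 * (ν n Fs).toReal ≤ V := by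
    calc (2 * C + 1) ^ 2 * (ν n Fs).toReal
        ≤ ∫ x in Fs, ‖f x - m‖ ^ 2 ∂(ν n) :=
          by
            have := setIntegral_ge_of_const_le hFmeas (measure_ne_top _ _) hptF hVint.integrableOn
            rwa [smul_eq_mul, mul_comm, measureReal_def] at this
      _ ≤ V := setIntegral_le_integral hVint (Filter.Eventually.of_forall fun x => by positivity)
  nlinarith [hFreal, hVC, hC0, sq_nonneg (2 * C + 1), ENNReal.toReal_nonneg (a := ν n Fs)]
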